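/- arXiv:1206.1001 — 3 statements merged into one kernel-verified Lean document; each statement's English description precedes it below -/
import Mathlib

section
/- Let Γ ⊆ ℂ^m be a nonempty closed convex set, Φ and Λ unitary m×m matrices, Y ∈ ℝ^m with Y_j ≥ 0, and θ ∈ ℝ^m. If f ∈ Γ and f⁺ = P_o(P_f^θ f), then ε_f(f⁺) ≤ ε_f(f), with equality if and only if f⁺ = f. (One step of the Error-Reduction iteration does not increase the frequency-domain error, and the error strictly decreases unless a fixed point has been reached.) -/
open Complex

/-- Euclidean norm on `ℂ^m`. -/
noncomputable def enorm' {m : ℕ} (x : Fin m → ℂ) : ℝ :=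
  Real.sqrt (∑ j, ‖x j‖ ^ 2)

/-- The intensity-fitting map `T^θ`: replace each coordinate's modulus by `Y_j`,
keeping its phase; where the coordinate vanishes, impose the phase `θ_j`. -/
noncomputable def intensityFit {m : ℕ} (Y : Fin m → ℝ) (θ : Fin m → ℝ)
    (G : Fin m → ℂ) : Fin m → ℂ :=
  fun j => if G j = 0 then (Y j : ℂ) * Complex.exp (Complex.I * θ j)
    else (Y j : ℂ) * (G j / (‖G j‖ : ℂ))

/-- The frequency-domain projection `P_f^θ = Λ⁻¹ Φ⁻¹ T^θ Φ Λ` (for unitary `Φ, Λ`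
the inverses are the conjugate transposes). -/
noncomputable def freqProj {m : ℕ} (Φ Λ : Matrix (Fin m) (Fin m) ℂ)
    (Y : Fin m → ℝ) (θ : Fin m → ℝ) (h : Fin m → ℂ) : Fin m → ℂ :=
  (Matrix.conjTranspose Λ).mulVec ((Matrix.conjTranspose Φ).mulVec (intensityFit Y θ (Φ.mulVec (Λ.mulVec h))))

/-- The frequency-domain error `ε_f(h) = ‖Y − |ΦΛh|‖`. -/
noncomputable def epsF {m : ℕ} (Φ Λ : Matrix (Fin m) (Fin m) ℂ)
    (Y : Fin m → ℝ) (h : Fin m → ℂ) : ℝ :=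
  Real.sqrt (∑ j, (Y j - ‖(Φ.mulVec (Λ.mulVec h)) j‖) ^ 2)

open Matrix

lemma sum_abs_sq_mulVec' {m : ℕ} {U : Matrix (Fin m) (Fin m) ℂ}
    (hU : Uᴴ * U = 1) (x : Fin m → ℂ) :
    ∑ j, ‖U.mulVec x j‖ ^ 2 = ∑ j, ‖x j‖ ^ 2 := by
  have key : star (U.mulVec x) ⬝ᵥ U.mulVec x = star x ⬝ᵥ x := by
    rw [star_mulVec, dotProduct_mulVec, vecMul_vecMul, hU, vecMul_one]
  have re_eq : ∀ y : Fin m → ℂ, (star y ⬝ᵥ y).re = ∑ j, ‖y j‖ ^ 2 := by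
    intro y
    simp [dotProduct, Complex.re_sum, Pi.star_apply, Complex.sq_norm,
      ← Complex.normSq_eq_conj_mul_self, Complex.normSq]
  rw [← re_eq, ← re_eq, key]

lemma enorm'_mulVec {m : ℕ} {U : Matrix (Fin m) (Fin m) ℂ}
    (hU : Uᴴ * U = 1) (x : Fin m → ℂ) :
    enorm' (U.mulVec x) = enorm' x := by
  unfold enorm'; rw [sum_abs_sq_mulVec' hU]

lemma abs_intensityFit {m : ℕ} (Y θ : Fin m → ℝ) (hY : ∀ j, 0 ≤ Y j)
    (G : Fin m → ℂ) (j : Fin m) : ‖intensityFit Y θ G j‖ = Y j := by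
  unfold intensityFit
  by_cases h : G j = 0
  · simp [h, Complex.norm_exp, _root_.abs_of_nonneg (hY j)]
  · have hne : ‖G j‖ ≠ 0 := norm_ne_zero_iff.mpr h
    simp [h, norm_mul, norm_div, hne, _root_.abs_of_nonneg (hY j)]

lemma abs_intensityFit_sub {m : ℕ} (Y θ : Fin m → ℝ) (hY : ∀ j, 0 ≤ Y j)
    (G : Fin m → ℂ) (j : Fin m) :
    ‖intensityFit Y θ G j - G j‖ = |Y j - ‖G j‖| := by
  unfold intensityFit
  by_cases h : G j = 0
  · simp [h, Complex.norm_exp, _root_.abs_of_nonneg (hY j)]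
  · have heq : (Y j : ℂ) * (G j / (‖G j‖ : ℂ)) - G j
        = ((Y j - ‖G j‖ : ℝ) : ℂ) * (G j / (‖G j‖ : ℂ)) := by
      have hne : (‖G j‖ : ℂ) ≠ 0 := by
        exact_mod_cast norm_ne_zero_iff.mpr h
      push_cast
      field_simp
    rw [if_neg h, heq, norm_mul, norm_div]
    simp only [Complex.norm_real, Real.norm_eq_abs, abs_norm]
    rw [div_self (norm_ne_zero_iff.mpr h), mul_one]

lemma enorm'_eq_norm {m : ℕ} (x : Fin m → ℂ) :
    enorm' x = ‖(EuclideanSpace.equiv (Fin m) ℂ).symm x‖ := by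
  rw [EuclideanSpace.norm_eq]
  simp [enorm']

lemma enorm'_sub_comm {m : ℕ} (a b : Fin m → ℂ) :
    enorm' (a - b) = enorm' (b - a) := by
  unfold enorm'
  congr 1
  refine Finset.sum_congr rfl fun j _ => ?_
  rw [Pi.sub_apply, Pi.sub_apply, norm_sub_rev]

/-- One step of the Error-Reduction iteration does not increase the
frequency-domain error, with equality exactly at a fixed point. -/
theorem error_reduction_step_decreases_error
    (m : ℕ) (hm : 1 ≤ m)
    (Γ : Set (Fin m → ℂ)) (hΓne : Γ.Nonempty) (hΓclosed : IsClosed Γ)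
    (hΓconvex : Convex ℝ Γ)
    (Φ Λ : Matrix (Fin m) (Fin m) ℂ)
    (hΦ : Φ ∈ Matrix.unitaryGroup (Fin m) ℂ)
    (hΛ : Λ ∈ Matrix.unitaryGroup (Fin m) ℂ)
    (Y : Fin m → ℝ) (hY : ∀ j, 0 ≤ Y j)
    (θ : Fin m → ℝ)
    (Po : (Fin m → ℂ) → (Fin m → ℂ))
    (hPo : ∀ x, Po x ∈ Γ ∧ ∀ y ∈ Γ, enorm' (Po x - x) ≤ enorm' (y - x))
    (f fplus : Fin m → ℂ) (hf : f ∈ Γ)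
    (hstep : fplus = Po (freqProj Φ Λ Y θ f)) :
    epsF Φ Λ Y fplus ≤ epsF Φ Λ Y f ∧
      (epsF Φ Λ Y fplus = epsF Φ Λ Y f ↔ fplus = f) := by
  classical
  set U : Matrix (Fin m) (Fin m) ℂ := Φ * Λ with hUdef
  have hUmem : U ∈ Matrix.unitaryGroup (Fin m) ℂ := mul_mem hΦ hΛ
  have h1 : Uᴴ * U = 1 := by
    rw [← Matrix.star_eq_conjTranspose]; exact (Unitary.mem_iff.mp hUmem).1
  have h2 : (Uᴴ)ᴴ * Uᴴ = 1 := by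
    rw [Matrix.conjTranspose_conjTranspose, ← Matrix.star_eq_conjTranspose]
    exact (Unitary.mem_iff.mp hUmem).2
  have hcomp : ∀ h : Fin m → ℂ, Φ.mulVec (Λ.mulVec h) = U.mulVec h := by
    intro h; rw [Matrix.mulVec_mulVec]
  have hproj : ∀ h : Fin m → ℂ,
      freqProj Φ Λ Y θ h = Uᴴ.mulVec (intensityFit Y θ (U.mulVec h)) := by
    intro h
    unfold freqProj
    rw [hcomp, Matrix.mulVec_mulVec, ← Matrix.conjTranspose_mul]
  have hUU : ∀ x : Fin m → ℂ, Uᴴ.mulVec (U.mulVec x) = x := by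
    intro x
    rw [Matrix.mulVec_mulVec, h1, Matrix.one_mulVec]
  set G : Fin m → ℂ := U.mulVec f with hG
  set T : Fin m → ℂ := intensityFit Y θ G with hT
  set g : Fin m → ℂ := freqProj Φ Λ Y θ f with hg
  have hgT : g = Uᴴ.mulVec T := by rw [hg, hproj f]
  -- (a) epsF f = enorm' (g - f)
  have ha : epsF Φ Λ Y f = enorm' (g - f) := by
    have : g - f = Uᴴ.mulVec (T - G) := by
      rw [Matrix.mulVec_sub, ← hgT]
      congr 1
      rw [hG, hUU]
    rw [this, enorm'_mulVec h2]
    unfold epsF enorm'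
    rw [hcomp]
    congr 1
    refine Finset.sum_congr rfl fun j _ => ?_
    rw [Pi.sub_apply, hT, abs_intensityFit_sub Y θ hY, _root_.sq_abs]
  -- (b) epsF fplus ≤ enorm' (g - fplus)
  have hb : epsF Φ Λ Y fplus ≤ enorm' (g - fplus) := by
    have hgf : g - fplus = Uᴴ.mulVec (T - U.mulVec fplus) := by
      rw [Matrix.mulVec_sub, ← hgT, hUU]
    rw [hgf, enorm'_mulVec h2]
    unfold epsF enorm'
    rw [hcomp]
    apply Real.sqrt_le_sqrt
    refine Finset.sum_le_sum fun j _ => ?_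
    have h3 : |Y j - ‖U.mulVec fplus j‖|
        ≤ ‖T j - U.mulVec fplus j‖ := by
      have := abs_norm_sub_norm_le (T j) (U.mulVec fplus j)
      rwa [hT, abs_intensityFit Y θ hY] at this
    calc (Y j - ‖U.mulVec fplus j‖) ^ 2
        = |Y j - ‖U.mulVec fplus j‖| ^ 2 := (_root_.sq_abs _).symm
      _ ≤ ‖T j - U.mulVec fplus j‖ ^ 2 := by
          exact pow_le_pow_left₀ (abs_nonneg _) h3 2
      _ = ‖(T - U.mulVec fplus) j‖ ^ 2 := by rw [Pi.sub_apply]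
  -- (c) enorm' (fplus - g) ≤ enorm' (f - g)
  have hfplusΓ : fplus ∈ Γ := hstep ▸ (hPo g).1
  have hc : enorm' (fplus - g) ≤ enorm' (f - g) := by
    rw [hstep]; exact (hPo g).2 f hf
  have hmain : epsF Φ Λ Y fplus ≤ epsF Φ Λ Y f := by
    calc epsF Φ Λ Y fplus ≤ enorm' (g - fplus) := hb
      _ = enorm' (fplus - g) := enorm'_sub_comm _ _
      _ ≤ enorm' (f - g) := hc
      _ = enorm' (g - f) := enorm'_sub_comm _ _
      _ = epsF Φ Λ Y f := ha.symm
  refine ⟨hmain, ?_, fun h => by rw [h]⟩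
  intro heq
  -- equality forces ‖fplus - g‖ = ‖f - g‖, both minimal; uniqueness via parallelogram
  have hd : enorm' (fplus - g) = enorm' (f - g) := by
    apply le_antisymm hc
    calc enorm' (f - g) = enorm' (g - f) := enorm'_sub_comm _ _
      _ = epsF Φ Λ Y f := ha.symm
      _ = epsF Φ Λ Y fplus := heq.symm
      _ ≤ enorm' (g - fplus) := hb
      _ = enorm' (fplus - g) := enorm'_sub_comm _ _
  set mp : Fin m → ℂ := (1/2 : ℝ) • f + (1/2 : ℝ) • fplus with hmp
  have hmpΓ : mp ∈ Γ :=
    hΓconvex hf hfplusΓ (by norm_num) (by norm_num) (by norm_num)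
  have hmple : enorm' (fplus - g) ≤ enorm' (mp - g) := by
    rw [hstep]; exact (hPo g).2 mp hmpΓ
  set e := (EuclideanSpace.equiv (Fin m) ℂ).symm with he
  have hpar := parallelogram_law_with_norm ℂ (e (f - g)) (e (fplus - g))
  have hsum : e (f - g) + e (fplus - g) = (2 : ℂ) • e (mp - g) := by
    rw [← map_add, ← e.map_smul]
    congr 1
    funext j
    simp only [hmp, Pi.add_apply, Pi.sub_apply, Pi.smul_apply, Complex.real_smul,
      smul_eq_mul, Complex.ofReal_div, Complex.ofReal_one, Complex.ofReal_ofNat]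
    ring
  have hdiff : e (f - g) - e (fplus - g) = e (f - fplus) := by
    rw [← map_sub]
    congr 1
    abel
  rw [hsum, hdiff, norm_smul] at hpar
  have h0 : (0:ℝ) ≤ enorm' (fplus - g) := Real.sqrt_nonneg _
  simp only [enorm'_eq_norm] at hd hmple h0
  have hf0 : ‖e (f - fplus)‖ ^ 2 ≤ 0 := by
    simp only [Complex.norm_ofNat] at hpar
    nlinarith [hpar, hmple, hd, h0]
  have : e (f - fplus) = 0 := by
    have := norm_nonneg (e (f - fplus))
    have h4 : ‖e (f - fplus)‖ = 0 := by nlinarith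
    exact norm_eq_zero.mp h4
  have hsub : f - fplus = 0 := by
    have := (map_eq_zero_iff e (e.injective)).mp this
    exact this
  have : f = fplus := sub_eq_zero.mp hsub
  exact this.symm
end

section
/- Let Γ ⊆ ℂ^m be a nonempty closed convex set, Φ and Λ unitary m×m matrices, and Y ∈ ℝ^m with Y_j ≥ 0. Let f_0 ∈ ℂ^m and define the Error-Reduction iterates f_{k+1} = P_o(P_f f_k) for k ≥ 0, where P_f = P_f^0. Suppose a subsequence (f_{k_j}) converges to some h ∈ ℂ^m. Then: (1) if (ΦΛh)_j ≠ 0 for every coordinate j, then h is a fixed point of P_o ∘ P_f, i.e. h = P_o(P_f h); (2) if (ΦΛh)_j = 0 for some j, then there exists θ ∈ ℝ^m such that h = P_o(P_f^θ h). -/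
open Complex Filter Topology

namespace ERAux

open Matrix

/-- Squared Euclidean norm. -/
noncomputable def Qn {m : ℕ} (x : Fin m → ℂ) : ℝ := ∑ j, ‖x j‖ ^ 2

lemma Qn_nonneg {m : ℕ} (x : Fin m → ℂ) : 0 ≤ Qn x :=
  Finset.sum_nonneg fun _ _ => sq_nonneg _

lemma enorm'_eq {m : ℕ} (x : Fin m → ℂ) : enorm' x = Real.sqrt (Qn x) := by
  unfold enorm' Qn
  rfl

lemma Qn_eq_zero {m : ℕ} {x : Fin m → ℂ} (hx : Qn x = 0) : x = 0 := by
  have h := (Finset.sum_eq_zero_iff_of_nonneg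
    (fun j _ => sq_nonneg ‖x j‖)).mp hx
  funext j
  have h2 := h j (Finset.mem_univ j)
  have h3 : ‖x j‖ = 0 := by
    have := sq_eq_zero_iff.mp h2
    simpa using this
  simpa using norm_eq_zero.mp h3

lemma continuous_Qn {m : ℕ} : Continuous (Qn (m := m)) := by
  unfold Qn
  exact continuous_finset_sum _ fun j _ => ((continuous_apply j).norm.pow 2)

lemma continuous_enorm' {m : ℕ} : Continuous (enorm' (m := m)) := by
  have : Continuous fun x : Fin m → ℂ => Real.sqrt (Qn x) :=
    Real.continuous_sqrt.comp continuous_Qn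
  exact this.congr fun x => (enorm'_eq x).symm

lemma dot_eq {m : ℕ} (y : Fin m → ℂ) :
    dotProduct (star y) y = ((Qn y : ℝ) : ℂ) := by
  unfold Qn dotProduct
  push_cast
  refine Finset.sum_congr rfl fun j _ => ?_
  rw [Pi.star_apply]
  rw [show star (y j) = (starRingEnd ℂ) (y j) from rfl]
  rw [show ((‖y j‖ : ℝ) : ℂ) ^ 2 = (((‖y j‖) ^ 2 : ℝ) : ℂ) by push_cast; ring]
  rw [Complex.sq_norm]
  exact Complex.normSq_eq_conj_mul_self.symm

lemma Qn_mulVec {m : ℕ} {U : Matrix (Fin m) (Fin m) ℂ}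
    (hU : U ∈ Matrix.unitaryGroup (Fin m) ℂ) (x : Fin m → ℂ) :
    Qn (U.mulVec x) = Qn x := by
  have h1 : Uᴴ * U = 1 := by
    rw [← Matrix.star_eq_conjTranspose]
    exact (Unitary.mem_iff.mp hU).1
  have key : ((Qn (U.mulVec x) : ℝ) : ℂ) = ((Qn x : ℝ) : ℂ) := by
    rw [← dot_eq, ← dot_eq, Matrix.star_mulVec, Matrix.dotProduct_mulVec,
      Matrix.vecMul_vecMul, h1, Matrix.vecMul_one]
  exact_mod_cast key

lemma mulVec_conjTranspose_cancel {m : ℕ} {U : Matrix (Fin m) (Fin m) ℂ}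
    (hU : U ∈ Matrix.unitaryGroup (Fin m) ℂ) (x : Fin m → ℂ) :
    U.mulVec (Uᴴ.mulVec x) = x := by
  rw [Matrix.mulVec_mulVec, ← Matrix.star_eq_conjTranspose,
    (Unitary.mem_iff.mp hU).2, Matrix.one_mulVec]

lemma continuous_mulVec {m : ℕ} (M : Matrix (Fin m) (Fin m) ℂ) :
    Continuous fun v : Fin m → ℂ => M.mulVec v := by
  refine continuous_pi fun j => ?_
  simp only [Matrix.mulVec, dotProduct]
  exact continuous_finset_sum _ fun i _ => continuous_const.mul (continuous_apply i)

lemma norm_intensityFit {m : ℕ} (Y θ : Fin m → ℝ) (hY : ∀ j, 0 ≤ Y j)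
    (G : Fin m → ℂ) (j : Fin m) : ‖intensityFit Y θ G j‖ = Y j := by
  unfold intensityFit
  by_cases hG : G j = 0
  · rw [if_pos hG, norm_mul, mul_comm Complex.I]
    rw [Complex.norm_real, Real.norm_eq_abs,
      Complex.norm_exp_ofReal_mul_I, _root_.abs_of_nonneg (hY j), mul_one]
  · rw [if_neg hG, norm_mul, norm_div]
    have habs : ‖G j‖ ≠ 0 := by
      simpa using hG
    rw [Complex.norm_real, Complex.norm_real, Real.norm_eq_abs, Real.norm_eq_abs,
      _root_.abs_of_nonneg (hY j),
      _root_.abs_of_nonneg (norm_nonneg (G j)), div_self habs, mul_one]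

lemma norm_sub_intensityFit {m : ℕ} (Y θ : Fin m → ℝ) (hY : ∀ j, 0 ≤ Y j)
    (G : Fin m → ℂ) (j : Fin m) :
    ‖G j - intensityFit Y θ G j‖ = |‖G j‖ - Y j| := by
  unfold intensityFit
  by_cases hG : G j = 0
  · rw [if_pos hG, hG, zero_sub, norm_neg, norm_mul, mul_comm Complex.I]
    rw [Complex.norm_real, Real.norm_eq_abs,
      Complex.norm_exp_ofReal_mul_I, mul_one, norm_zero, zero_sub, abs_neg,
      _root_.abs_of_nonneg (hY j)]
  · rw [if_neg hG]
    have habs : ‖G j‖ ≠ 0 := by simpa using hG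
    have habsC : ((‖G j‖ : ℝ) : ℂ) ≠ 0 := by
      simpa using habs
    have key : G j - (Y j : ℂ) * (G j / (‖G j‖ : ℂ))
        = G j * ((((‖G j‖ - Y j : ℝ)) : ℂ) / (‖G j‖ : ℂ)) := by
      push_cast
      field_simp
    rw [key, norm_mul, norm_div, Complex.norm_real, Complex.norm_real,
      Real.norm_eq_abs, Real.norm_eq_abs,
      _root_.abs_of_nonneg (norm_nonneg (G j))]
    rw [mul_div_assoc']
    rw [mul_comm, mul_div_assoc, div_self habs, mul_one]

/-- The frequency-domain misfit (squared). -/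
noncomputable def Dsq {m : ℕ} (Φ Λ : Matrix (Fin m) (Fin m) ℂ) (Y : Fin m → ℝ)
    (w : Fin m → ℂ) : ℝ :=
  ∑ j, (‖(Φ.mulVec (Λ.mulVec w)) j‖ - Y j) ^ 2

lemma Dsq_nonneg {m : ℕ} (Φ Λ : Matrix (Fin m) (Fin m) ℂ) (Y : Fin m → ℝ)
    (w : Fin m → ℂ) : 0 ≤ Dsq Φ Λ Y w :=
  Finset.sum_nonneg fun _ _ => sq_nonneg _

lemma continuous_Dsq {m : ℕ} (Φ Λ : Matrix (Fin m) (Fin m) ℂ) (Y : Fin m → ℝ) :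
    Continuous (Dsq Φ Λ Y) := by
  unfold Dsq
  refine continuous_finset_sum _ fun j _ => ?_
  have h1 : Continuous fun w : Fin m → ℂ => (Φ.mulVec (Λ.mulVec w)) j :=
    (continuous_apply j).comp ((continuous_mulVec Φ).comp (continuous_mulVec Λ))
  exact (h1.norm.sub continuous_const).pow 2

lemma mulVec_freqProj {m : ℕ} {Φ Λ : Matrix (Fin m) (Fin m) ℂ}
    (hΦ : Φ ∈ Matrix.unitaryGroup (Fin m) ℂ) (hΛ : Λ ∈ Matrix.unitaryGroup (Fin m) ℂ)
    (Y θ : Fin m → ℝ) (w : Fin m → ℂ) :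
    Φ.mulVec (Λ.mulVec (freqProj Φ Λ Y θ w))
      = intensityFit Y θ (Φ.mulVec (Λ.mulVec w)) := by
  unfold freqProj
  rw [mulVec_conjTranspose_cancel hΛ, mulVec_conjTranspose_cancel hΦ]

lemma Qn_sub_freqProj {m : ℕ} {Φ Λ : Matrix (Fin m) (Fin m) ℂ}
    (hΦ : Φ ∈ Matrix.unitaryGroup (Fin m) ℂ) (hΛ : Λ ∈ Matrix.unitaryGroup (Fin m) ℂ)
    {Y : Fin m → ℝ} (hY : ∀ j, 0 ≤ Y j) (θ : Fin m → ℝ) (w : Fin m → ℂ) :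
    Qn (w - freqProj Φ Λ Y θ w) = Dsq Φ Λ Y w := by
  rw [← Qn_mulVec hΛ (w - freqProj Φ Λ Y θ w), ← Qn_mulVec hΦ]
  rw [Matrix.mulVec_sub, Matrix.mulVec_sub, mulVec_freqProj hΦ hΛ]
  unfold Qn Dsq
  refine Finset.sum_congr rfl fun j _ => ?_
  rw [Pi.sub_apply, norm_sub_intensityFit Y θ hY, _root_.sq_abs]

lemma Dsq_le_Qn_sub {m : ℕ} {Φ Λ : Matrix (Fin m) (Fin m) ℂ}
    (hΦ : Φ ∈ Matrix.unitaryGroup (Fin m) ℂ) (hΛ : Λ ∈ Matrix.unitaryGroup (Fin m) ℂ)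
    {Y : Fin m → ℝ} (w v : Fin m → ℂ)
    (hv : ∀ j, ‖(Φ.mulVec (Λ.mulVec v)) j‖ = Y j) :
    Dsq Φ Λ Y w ≤ Qn (w - v) := by
  rw [← Qn_mulVec hΛ (w - v), ← Qn_mulVec hΦ, Matrix.mulVec_sub, Matrix.mulVec_sub]
  unfold Qn Dsq
  refine Finset.sum_le_sum fun j _ => ?_
  rw [Pi.sub_apply, ← hv j]
  calc (‖(Φ.mulVec (Λ.mulVec w)) j‖ - ‖(Φ.mulVec (Λ.mulVec v)) j‖) ^ 2
      = |‖(Φ.mulVec (Λ.mulVec w)) j‖ - ‖(Φ.mulVec (Λ.mulVec v)) j‖| ^ 2 := (_root_.sq_abs _).symm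
    _ ≤ ‖(Φ.mulVec (Λ.mulVec w)) j - (Φ.mulVec (Λ.mulVec v)) j‖ ^ 2 := by
        have := abs_norm_sub_norm_le ((Φ.mulVec (Λ.mulVec w)) j) ((Φ.mulVec (Λ.mulVec v)) j)
        exact pow_le_pow_left₀ (abs_nonneg _) this 2

lemma Qn_parallelogram {m : ℕ} (p q : Fin m → ℂ) :
    Qn (p + q) + Qn (p - q) = 2 * (Qn p + Qn q) := by
  unfold Qn
  rw [← Finset.sum_add_distrib, ← Finset.sum_add_distrib, Finset.mul_sum]
  refine Finset.sum_congr rfl fun j _ => ?_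
  have h := parallelogram_law_with_norm ℂ (p j) (q j)
  simp only [Pi.add_apply, Pi.sub_apply]
  nlinarith [h]

lemma Qn_smul {m : ℕ} (c : ℝ) (x : Fin m → ℂ) : Qn (c • x) = c ^ 2 * Qn x := by
  unfold Qn
  rw [Finset.mul_sum]
  refine Finset.sum_congr rfl fun j _ => ?_
  rw [Pi.smul_apply, norm_smul, mul_pow, Real.norm_eq_abs, _root_.sq_abs]

end ERAux

open ERAux in
/-- Every limit of a convergent subsequence of the Error-Reduction
iterates is a fixed point of `P_o ∘ P_f` (if `ΦΛh` vanishes nowhere) or of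
`P_o ∘ P_f^θ` for some `θ` (otherwise). -/
theorem error_reduction_subsequential_limit_fixed_point
    (m : ℕ) (hm : 1 ≤ m)
    (Γ : Set (Fin m → ℂ)) (hΓne : Γ.Nonempty) (hΓclosed : IsClosed Γ)
    (hΓconvex : Convex ℝ Γ)
    (Φ Λ : Matrix (Fin m) (Fin m) ℂ)
    (hΦ : Φ ∈ Matrix.unitaryGroup (Fin m) ℂ)
    (hΛ : Λ ∈ Matrix.unitaryGroup (Fin m) ℂ)
    (Y : Fin m → ℝ) (hY : ∀ j, 0 ≤ Y j)
    (Po : (Fin m → ℂ) → (Fin m → ℂ))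
    (hPo : ∀ x, Po x ∈ Γ ∧ ∀ y ∈ Γ, enorm' (Po x - x) ≤ enorm' (y - x))
    (f : ℕ → (Fin m → ℂ))
    (hiter : ∀ k, f (k + 1) = Po (freqProj Φ Λ Y 0 (f k)))
    (k : ℕ → ℕ) (hk : StrictMono k)
    (h : Fin m → ℂ)
    (hlim : Tendsto (fun j => f (k j)) atTop (𝓝 h)) :
    ((∀ j, (Φ.mulVec (Λ.mulVec h)) j ≠ 0) → h = Po (freqProj Φ Λ Y 0 h)) ∧
    ((∃ j, (Φ.mulVec (Λ.mulVec h)) j = 0) →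
      ∃ θ : Fin m → ℝ, h = Po (freqProj Φ Λ Y θ h)) := by
  classical
  have hUc : Continuous fun x : Fin m → ℂ => Φ.mulVec (Λ.mulVec x) :=
    (continuous_mulVec Φ).comp (continuous_mulVec Λ)
  set u : Fin m → ℂ := Φ.mulVec (Λ.mulVec h) with hu
  have hfΓ : ∀ n, 1 ≤ n → f n ∈ Γ := by
    intro n hn
    cases n with
    | zero => omega
    | succ p => rw [hiter p]; exact (hPo _).1
  set D : (Fin m → ℂ) → ℝ := fun w => Real.sqrt (Dsq Φ Λ Y w) with hD
  have hDcont : Continuous D := Real.continuous_sqrt.comp (continuous_Dsq Φ Λ Y)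
  have hDnonneg : ∀ w, 0 ≤ D w := fun w => Real.sqrt_nonneg _
  have hB : ∀ (w v : Fin m → ℂ), (∀ j, ‖(Φ.mulVec (Λ.mulVec v)) j‖ = Y j) →
      D w ≤ enorm' (w - v) := by
    intro w v hv
    rw [enorm'_eq]
    exact Real.sqrt_le_sqrt (Dsq_le_Qn_sub hΦ hΛ w v hv)
  have hYfreq : ∀ (θ' : Fin m → ℝ) (w : Fin m → ℂ) (j : Fin m),
      ‖(Φ.mulVec (Λ.mulVec (freqProj Φ Λ Y θ' w))) j‖ = Y j := by
    intro θ' w j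
    rw [mulVec_freqProj hΦ hΛ]
    exact norm_intensityFit Y θ' hY _ j
  have hA : ∀ (θ' : Fin m → ℝ) (w : Fin m → ℂ),
      enorm' (w - freqProj Φ Λ Y θ' w) = D w := by
    intro θ' w
    rw [enorm'_eq, Qn_sub_freqProj hΦ hΛ hY θ' w]
  have hstep : ∀ n, 1 ≤ n → D (f (n + 1)) ≤ D (f n) := by
    intro n hn
    calc D (f (n + 1)) ≤ enorm' (f (n + 1) - freqProj Φ Λ Y 0 (f n)) :=
          hB _ _ (hYfreq 0 (f n))
      _ = enorm' (Po (freqProj Φ Λ Y 0 (f n)) - freqProj Φ Λ Y 0 (f n)) := by rw [hiter n]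
      _ ≤ enorm' (f n - freqProj Φ Λ Y 0 (f n)) := (hPo _).2 (f n) (hfΓ n hn)
      _ = D (f n) := hA 0 (f n)
  have hmono : ∀ n, 1 ≤ n → ∀ p, n ≤ p → D (f p) ≤ D (f n) := by
    intro n hn p hp
    induction p, hp using Nat.le_induction with
    | base => exact le_refl _
    | succ p hp ih => exact le_trans (hstep p (le_trans hn hp)) ih
  set x : ℕ → (Fin m → ℂ) := fun j' => intensityFit Y 0 (Φ.mulVec (Λ.mulVec (f (k j')))) with hx
  have hxS : ∀ n, x n ∈ Set.univ.pi (fun j => Metric.sphere (0 : ℂ) (Y j)) := by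
    intro n
    rw [Set.mem_univ_pi]
    intro j
    rw [mem_sphere_zero_iff_norm]
    exact norm_intensityFit Y 0 hY _ j
  obtain ⟨v, hvS, φ, hφ, hxv⟩ :=
    (isCompact_univ_pi fun i => isCompact_sphere (0 : ℂ) (Y i)).tendsto_subseq hxS
  have hvnorm : ∀ j, ‖v j‖ = Y j := fun j =>
    mem_sphere_zero_iff_norm.mp (hvS j (Set.mem_univ j))
  set a : ℕ → ℕ := fun l => k (φ l) with ha
  have haa : ∀ l, l ≤ a l := fun l => le_trans hφ.le_apply hk.le_apply
  have hfa : Tendsto (fun l => f (a l)) atTop (𝓝 h) := hlim.comp hφ.tendsto_atTop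
  have hUfa : Tendsto (fun l => Φ.mulVec (Λ.mulVec (f (a l)))) atTop (𝓝 u) :=
    (hUc.tendsto h).comp hfa
  have hvcoord : ∀ j, u j ≠ 0 → v j = (Y j : ℂ) * (u j / (‖u j‖ : ℂ)) := by
    intro j hj
    have h1 : Tendsto (fun l => (Φ.mulVec (Λ.mulVec (f (a l)))) j) atTop (𝓝 (u j)) :=
      ((continuous_apply j).tendsto u).comp hUfa
    have h2 : Tendsto (fun l => x (φ l) j) atTop (𝓝 (v j)) :=
      ((continuous_apply j).tendsto v).comp hxv
    have habs : Tendsto (fun l => ((‖(Φ.mulVec (Λ.mulVec (f (a l)))) j‖ : ℝ) : ℂ))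
        atTop (𝓝 ((‖u j‖ : ℝ) : ℂ)) :=
      (Complex.continuous_ofReal.tendsto _).comp ((continuous_norm.tendsto _).comp h1)
    have hne : ∀ᶠ l in atTop, (Φ.mulVec (Λ.mulVec (f (a l)))) j ≠ 0 := h1.eventually_ne hj
    have habsne : ((‖u j‖ : ℝ) : ℂ) ≠ 0 :=
      Complex.ofReal_ne_zero.mpr (norm_ne_zero_iff.mpr hj)
    have h3 : Tendsto (fun l => (Y j : ℂ) * ((Φ.mulVec (Λ.mulVec (f (a l)))) j
        / ((‖(Φ.mulVec (Λ.mulVec (f (a l)))) j‖ : ℝ) : ℂ))) atTop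
        (𝓝 ((Y j : ℂ) * (u j / ((‖u j‖ : ℝ) : ℂ)))) :=
      tendsto_const_nhds.mul (h1.div habs habsne)
    have heq : (fun l => (Y j : ℂ) * ((Φ.mulVec (Λ.mulVec (f (a l)))) j
        / ((‖(Φ.mulVec (Λ.mulVec (f (a l)))) j‖ : ℝ) : ℂ))) =ᶠ[atTop]
        (fun l => x (φ l) j) := by
      filter_upwards [hne] with l hl
      show _ = intensityFit Y 0 (Φ.mulVec (Λ.mulVec (f (a l)))) j
      simp only [intensityFit]
      rw [if_neg hl]
    exact tendsto_nhds_unique h2 (h3.congr' heq)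
  set θ : Fin m → ℝ := fun j => if u j = 0 then Complex.arg (v j) else 0 with hθ
  have hvT : intensityFit Y θ u = v := by
    funext j
    by_cases hj : u j = 0
    · have e : intensityFit Y θ u j = (Y j : ℂ) * Complex.exp (Complex.I * (θ j : ℂ)) := by
        simp only [intensityFit]
        rw [if_pos hj]
      rw [e]
      have hθj : θ j = Complex.arg (v j) := by simp [hθ, hj]
      have habsv : ‖v j‖ = Y j := by
        exact hvnorm j
      rw [hθj, ← habsv, mul_comm Complex.I]
      exact Complex.norm_mul_exp_arg_mul_I (v j)
    · have e : intensityFit Y θ u j = (Y j : ℂ) * (u j / (‖u j‖ : ℂ)) := by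
        simp only [intensityFit]
        rw [if_neg hj]
      rw [e]
      exact (hvcoord j hj).symm
  have hgv : freqProj Φ Λ Y θ h = (Matrix.conjTranspose Λ).mulVec
      ((Matrix.conjTranspose Φ).mulVec v) := by
    unfold freqProj
    rw [← hu, hvT]
  set g : Fin m → ℂ := freqProj Φ Λ Y θ h with hg
  set G : ℕ → (Fin m → ℂ) := fun l => freqProj Φ Λ Y 0 (f (a l)) with hG
  have hGx : ∀ l, G l = (Matrix.conjTranspose Λ).mulVec
      ((Matrix.conjTranspose Φ).mulVec (x (φ l))) := fun l => rfl
  have hGg : Tendsto G atTop (𝓝 g) := by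
    rw [hgv]
    have hc : Continuous fun zz : Fin m → ℂ =>
        (Matrix.conjTranspose Λ).mulVec ((Matrix.conjTranspose Φ).mulVec zz) :=
      (continuous_mulVec _).comp (continuous_mulVec _)
    have ht := (hc.tendsto v).comp hxv
    exact ht.congr fun l => (hGx l).symm
  have hDlim : Tendsto (fun l => D (f (a l))) atTop (𝓝 (D h)) := (hDcont.tendsto h).comp hfa
  have hLlb : ∀ n, 1 ≤ n → D h ≤ D (f n) := by
    intro n hn
    refine le_of_tendsto hDlim ?_
    filter_upwards [eventually_ge_atTop n] with l hl
    exact hmono n hn (a l) (le_trans hl (haa l))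
  have hPogΓ : Po g ∈ Γ := (hPo g).1
  have key1 : ∀ l, D h ≤ enorm' (Po g - G l) := by
    intro l
    have e2 : f (a l + 1) = Po (G l) := hiter (a l)
    calc D h ≤ D (f (a l + 1)) := hLlb (a l + 1) (Nat.succ_le_succ (Nat.zero_le _))
      _ = D (Po (G l)) := by rw [e2]
      _ ≤ enorm' (Po (G l) - G l) := hB _ _ (fun j => hYfreq 0 (f (a l)) j)
      _ ≤ enorm' (Po g - G l) := (hPo (G l)).2 (Po g) hPogΓ
  have hnormlim : Tendsto (fun l => enorm' (Po g - G l)) atTop (𝓝 (enorm' (Po g - g))) := by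
    have ht : Tendsto (fun l => Po g - G l) atTop (𝓝 (Po g - g)) := tendsto_const_nhds.sub hGg
    exact (continuous_enorm'.tendsto _).comp ht
  have key2 : D h ≤ enorm' (Po g - g) := ge_of_tendsto hnormlim (Eventually.of_forall key1)
  have hhΓ : h ∈ Γ := by
    refine hΓclosed.mem_of_tendsto hfa ?_
    filter_upwards [eventually_ge_atTop 1] with l hl
    exact hfΓ (a l) (le_trans hl (haa l))
  have key3 : enorm' (h - g) = D h := by rw [hg]; exact hA θ h
  have key4 : enorm' (Po g - g) ≤ D h := by rw [← key3]; exact (hPo g).2 h hhΓ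
  have Eq1 : enorm' (Po g - g) = D h := le_antisymm key4 key2
  have hQp : Qn (h - g) = D h ^ 2 := by
    have e := key3
    rw [enorm'_eq] at e
    rw [← e, Real.sq_sqrt (Qn_nonneg _)]
  have hQq : Qn (Po g - g) = D h ^ 2 := by
    have e := Eq1
    rw [enorm'_eq] at e
    rw [← e, Real.sq_sqrt (Qn_nonneg _)]
  set z : Fin m → ℂ := (2⁻¹ : ℝ) • h + (2⁻¹ : ℝ) • Po g with hz
  have hzΓ : z ∈ Γ := hΓconvex hhΓ hPogΓ (by norm_num) (by norm_num) (by norm_num)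
  have hzg : z - g = (2⁻¹ : ℝ) • ((h - g) + (Po g - g)) := by
    rw [hz]
    module
  have key5 : D h ≤ enorm' (z - g) := by rw [← Eq1]; exact (hPo g).2 z hzΓ
  have key5' : D h ^ 2 ≤ Qn (z - g) := by
    rw [enorm'_eq] at key5
    calc D h ^ 2 ≤ Real.sqrt (Qn (z - g)) ^ 2 := pow_le_pow_left₀ (hDnonneg h) key5 2
      _ = Qn (z - g) := Real.sq_sqrt (Qn_nonneg _)
  have hQz : Qn (z - g) = (2⁻¹ : ℝ) ^ 2 * Qn ((h - g) + (Po g - g)) := by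
    rw [hzg, Qn_smul]
  have hpar := Qn_parallelogram (h - g) (Po g - g)
  have hQdiff : Qn ((h - g) - (Po g - g)) ≤ 0 := by nlinarith [key5', hQz, hpar, hQp, hQq]
  have hpq : (h - g) - (Po g - g) = 0 := Qn_eq_zero (le_antisymm hQdiff (Qn_nonneg _))
  have hfix : h = Po g := by
    have e : h - Po g = 0 := by rw [← hpq]; abel
    exact sub_eq_zero.mp e
  constructor
  · intro hall
    have hθ0 : θ = 0 := by
      funext j
      have hj : u j ≠ 0 := hall j
      simp [hθ, hj]
    rw [← hθ0]
    rw [hg] at hfix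
    exact hfix
  · intro _
    refine ⟨θ, ?_⟩
    rw [hg] at hfix
    exact hfix
end

section
/- Let f ∈ C(𝒩) have at least three nonzero entries (this holds in particular when f has rank ≥ 2), and extend λ : 𝒩 → 𝕊¹ by λ(m) = 1 for m ∉ 𝒩. Then for μ-almost every λ ∈ (𝕊¹)^𝒩: for every t ∈ ℤ^d, neither the array n ↦ λ(t+n) f(t+n) nor the array n ↦ conj(λ(t−n) f(t−n)) is conjugate symmetric. (The z-transform of every shift of the randomly illuminated image, and of its conjugate inversion, is almost surely not conjugate symmetric.) -/
open MeasureTheory Complex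
open ComplexConjugate
open scoped ENNReal

noncomputable instance : MeasurableSpace Circle := borel Circle
instance : BorelSpace Circle := ⟨rfl⟩

/-- The box `𝒩 = {n ∈ ℤ^d : 0 ≤ n_j ≤ N_j}`. -/
def inBox {d : ℕ} (N : Fin d → ℕ) (n : Fin d → ℤ) : Prop :=
  ∀ j, 0 ≤ n j ∧ n j ≤ (N j : ℤ)

/-- Extension of an illumination `λ : 𝒩 → 𝕊¹` to all of `ℤ^d` by `λ(m) = 1` outside `𝒩`. -/
noncomputable def illumExt {d : ℕ} (N : Fin d → ℕ)
    (lam : (∀ j, Fin (N j + 1)) → Circle) (m : Fin d → ℤ) : ℂ :=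
  if h : ∀ j, 0 ≤ m j ∧ m j ≤ (N j : ℤ) then
    (lam (fun j => ⟨(m j).toNat, by have h1 := (h j).1; have h2 := (h j).2; omega⟩) : ℂ)
  else 1

/-- total index map -/
def idxT {d : ℕ} (N : Fin d → ℕ) (m : Fin d → ℤ) : ∀ j, Fin (N j + 1) :=
  fun j => ⟨(m j).toNat % (N j + 1), Nat.mod_lt _ (Nat.succ_pos _)⟩

lemma idxT_inj {d : ℕ} {N : Fin d → ℕ} {m m' : Fin d → ℤ}
    (h : inBox N m) (h' : inBox N m') (hne : m ≠ m') : idxT N m ≠ idxT N m' := by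
  intro he
  apply hne
  funext j
  have h1 := (h j).1; have h2 := (h j).2
  have h1' := (h' j).1; have h2' := (h' j).2
  have := congrFun he j
  have hv : (m j).toNat % (N j + 1) = (m' j).toNat % (N j + 1) := congrArg Fin.val this
  have e1 : (m j).toNat % (N j + 1) = (m j).toNat := Nat.mod_eq_of_lt (by omega)
  have e2 : (m' j).toNat % (N j + 1) = (m' j).toNat := Nat.mod_eq_of_lt (by omega)
  omega

lemma circle_mul_conj (x : Circle) : (x : ℂ) * conj (x : ℂ) = 1 := by
  rw [Complex.mul_conj, Complex.normSq_eq_norm_sq, Circle.norm_coe]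
  norm_num

lemma illumExt_box {d : ℕ} {N : Fin d → ℕ} (lam : (∀ j, Fin (N j + 1)) → Circle)
    {m : Fin d → ℤ} (h : inBox N m) : illumExt N lam m = (lam (idxT N m) : ℂ) := by
  have h' : ∀ j, 0 ≤ m j ∧ m j ≤ (N j : ℤ) := h
  rw [illumExt, dif_pos h']
  congr 1
  refine congrArg lam (funext fun j => Fin.ext ?_)
  have h1 := (h j).1; have h2 := (h j).2
  simp only [idxT]
  exact (Nat.mod_eq_of_lt (by omega)).symm

lemma illumExt_unit {d : ℕ} (N : Fin d → ℕ) (lam : (∀ j, Fin (N j + 1)) → Circle)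
    (m : Fin d → ℤ) : illumExt N lam m * conj (illumExt N lam m) = 1 := by
  rw [illumExt]
  split_ifs with h
  · exact circle_mul_conj _
  · simp

lemma illumExt_ne_zero {d : ℕ} (N : Fin d → ℕ) (lam : (∀ j, Fin (N j + 1)) → Circle)
    (m : Fin d → ℤ) : illumExt N lam m ≠ 0 := by
  rw [illumExt]
  split_ifs with h
  · exact Circle.coe_ne_zero _
  · exact one_ne_zero

section Core
open scoped ENNReal

lemma circle_pow_eq_finite (e : ℕ) (he : 0 < e) (z : ℂ) :
    {y : Circle | (y : ℂ) ^ e = z}.Finite := by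
  have h1 : {w : ℂ | w ^ e = z}.Finite := by
    apply Set.Finite.subset (Polynomial.nthRoots e z).toFinset.finite_toSet
    intro w hw
    simp only [Multiset.mem_toFinset, Finset.coe_sort_coe, Finset.mem_coe,
      Multiset.mem_toFinset, Polynomial.mem_nthRoots he]
    exact hw
  have : {y : Circle | (y : ℂ) ^ e = z} ⊆ (fun y : Circle => (y : ℂ)) ⁻¹' {w | w ^ e = z} :=
    fun y hy => hy
  exact Set.Finite.preimage (Set.injOn_of_injective Subtype.coe_injective) h1 |>.subset this

lemma core_null {ι : Type*} [Fintype ι] [DecidableEq ι] (μ : ι → Measure Circle)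
    [∀ i, IsProbabilityMeasure (μ i)] [∀ i, NullSingletonClass (μ i)]
    (i₀ : ι) (e : ℕ) (he : 0 < e) (F : (ι → Circle) → ℂ)
    (hFm : Measurable F)
    (hF : ∀ lam x, F (Function.update lam i₀ x) = F lam) :
    Measure.pi μ {lam | (lam i₀ : ℂ) ^ e = F lam} = 0 := by
  have hcoe : Measurable (fun y : Circle => (y : ℂ)) := by
    have : Continuous (fun y : Circle => (y : ℂ)) := continuous_induced_dom
    exact this.measurable
  have hmeas : MeasurableSet {lam : ι → Circle | (lam i₀ : ℂ) ^ e = F lam} := by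
    have h1 : Measurable fun lam : ι → Circle => (lam i₀ : ℂ) ^ e - F lam :=
      ((hcoe.comp (measurable_pi_apply i₀)).pow_const e).sub hFm
    have : {lam : ι → Circle | (lam i₀ : ℂ) ^ e = F lam}
        = (fun lam : ι → Circle => (lam i₀ : ℂ) ^ e - F lam) ⁻¹' {0} := by
      ext lam; simp [sub_eq_zero]
    rw [this]
    exact h1 (measurableSet_singleton 0)
  set E := {lam : ι → Circle | (lam i₀ : ℂ) ^ e = F lam}
  have hind : Measurable (E.indicator (1 : (ι → Circle) → ℝ≥0∞)) :=
    measurable_one.indicator hmeas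
  have key : ∀ x : ι → Circle,
      ∫⁻ y, E.indicator 1 (Function.update x i₀ y) ∂μ i₀ = 0 := by
    intro x
    have hpt : ∀ y : Circle, E.indicator (1 : (ι → Circle) → ℝ≥0∞) (Function.update x i₀ y)
        = Set.indicator {y : Circle | (y : ℂ) ^ e = F x} 1 y := by
      intro y
      have : Function.update x i₀ y ∈ E ↔ (y : ℂ) ^ e = F x := by
        simp only [E, Set.mem_setOf_eq, Function.update_self, hF]
      by_cases hy : (y : ℂ) ^ e = F x
      · simp [Set.indicator_apply, this, hy]
      · simp [Set.indicator_apply, this, hy]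
    simp_rw [hpt]
    have hfin := circle_pow_eq_finite e he (F x)
    rw [lintegral_indicator hfin.measurableSet]
    simp [hfin.countable.measure_zero (μ i₀)]
  calc Measure.pi μ E = ∫⁻ lam, E.indicator 1 lam ∂Measure.pi μ := by
        rw [lintegral_indicator hmeas]; simp
    _ = (∫⋯∫⁻_Finset.univ, E.indicator 1 ∂μ) (fun _ => 1) :=
        lintegral_eq_lmarginal_univ _
    _ = 0 := by
        rw [lmarginal_erase' _ hind (Finset.mem_univ i₀)]
        have : (fun x : ι → Circle => ∫⁻ y, E.indicator 1 (Function.update x i₀ y) ∂μ i₀)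
            = fun _ => 0 := funext key
        rw [this]
        simp [lmarginal]

end Core

lemma badS_null {d : ℕ} (N : Fin d → ℕ)
    (f : (Fin d → ℤ) → ℂ)
    (hfsupp : ∀ n, ¬ inBox N n → f n = 0)
    {a b c : Fin d → ℤ} (hab : a ≠ b) (hac : a ≠ c) (hbc : b ≠ c)
    (hfa : f a ≠ 0) (hfb : f b ≠ 0) (hfc : f c ≠ 0)
    (μn : (∀ j, Fin (N j + 1)) → Measure Circle)
    [∀ n, IsProbabilityMeasure (μn n)] [∀ n, NullSingletonClass (μn n)]
    (s : Fin d → ℤ) :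
    Measure.pi μn {lam | ∃ θ : ℝ, ∀ m : Fin d → ℤ,
      illumExt N lam m * f m = Complex.exp (Complex.I * θ) *
        conj (illumExt N lam (s - m) * f (s - m))} = 0 := by
  have hcoe : Measurable (fun y : Circle => (y : ℂ)) := by
    have : Continuous (fun y : Circle => (y : ℂ)) := continuous_induced_dom
    exact this.measurable
  have hbox : ∀ {w : Fin d → ℤ}, f w ≠ 0 → inBox N w := by
    intro w hw
    by_contra hc
    exact hw (hfsupp _ hc)
  have hsub : ∀ u v : Fin d → ℤ, u ≠ v → s - u ≠ s - v := by
    intro u v huv he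
    apply huv
    funext j
    have := congrFun he j
    simp only [Pi.sub_apply] at this
    omega
  have hcan : ∀ u v : Fin d → ℤ, s - u = v → u = s - v := by
    intro u v he
    funext j
    have := congrFun he j
    simp only [Pi.sub_apply] at this ⊢
    omega
  have hkey : ∀ (lam : (∀ j, Fin (N j + 1)) → Circle) (θ : ℝ),
      (∀ m : Fin d → ℤ, illumExt N lam m * f m = Complex.exp (Complex.I * θ) *
        conj (illumExt N lam (s - m) * f (s - m))) →
      ∀ w : Fin d → ℤ, f w ≠ 0 → f (s - w) ≠ 0 := by
    intro lam θ heq w hw hz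
    have h := heq w
    rw [hz, mul_zero, map_zero, mul_zero] at h
    exact (mul_ne_zero (illumExt_ne_zero N lam w) hw) h
  by_cases hfz : f (s - a) ≠ 0 ∧ f (s - b) ≠ 0 ∧ f (s - c) ≠ 0
  case neg =>
    have hempty : {lam : (∀ j, Fin (N j + 1)) → Circle | ∃ θ : ℝ, ∀ m : Fin d → ℤ,
        illumExt N lam m * f m = Complex.exp (Complex.I * θ) *
          conj (illumExt N lam (s - m) * f (s - m))} = ∅ := by
      apply Set.eq_empty_iff_forall_notMem.mpr
      rintro lam ⟨θ, heq⟩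
      exact hfz ⟨hkey lam θ heq a hfa, hkey lam θ heq b hfb, hkey lam θ heq c hfc⟩
    rw [hempty]
    exact measure_empty
  case pos =>
  obtain ⟨hfza, hfzb, hfzc⟩ := hfz
  have hstar : ∀ (lam : (∀ j, Fin (N j + 1)) → Circle) (θ : ℝ),
      (∀ m : Fin d → ℤ, illumExt N lam m * f m = Complex.exp (Complex.I * θ) *
        conj (illumExt N lam (s - m) * f (s - m))) →
      ∀ u v : Fin d → ℤ,
        illumExt N lam u * illumExt N lam (s - u) * (f u * conj (f (s - v)))
          = illumExt N lam v * illumExt N lam (s - v) * (f v * conj (f (s - u))) := by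
    intro lam θ heq u v
    have hu := heq u
    have hv := heq v
    rw [map_mul] at hu hv
    have h1 : illumExt N lam u * f u *
          (conj (illumExt N lam (s - v)) * conj (f (s - v)))
        = illumExt N lam v * f v *
          (conj (illumExt N lam (s - u)) * conj (f (s - u))) := by
      linear_combination (conj (illumExt N lam (s - v)) * conj (f (s - v))) * hu
        - (conj (illumExt N lam (s - u)) * conj (f (s - u))) * hv
    have hμu := illumExt_unit N lam (s - u)
    have hμv := illumExt_unit N lam (s - v)
    linear_combination (illumExt N lam (s - u) * illumExt N lam (s - v)) * h1
      - (illumExt N lam u * illumExt N lam (s - u) * f u * conj (f (s - v))) * hμv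
      + (illumExt N lam v * illumExt N lam (s - v) * f v * conj (f (s - u))) * hμu
  by_cases hin : (s - a = a ∨ s - a = b ∨ s - a = c) ∧ (s - b = a ∨ s - b = b ∨ s - b = c)
      ∧ (s - c = a ∨ s - c = b ∨ s - c = c)
  case pos =>
    -- there is a fixed point p among a,b,c; pick u ≠ p among a,b,c
    obtain ⟨p, u, hfp, hfu, hfσu, hσp, hpu⟩ :
        ∃ p u : Fin d → ℤ, f p ≠ 0 ∧ f u ≠ 0 ∧ f (s - u) ≠ 0 ∧ s - p = p ∧ p ≠ u := by
      obtain ⟨ha', hb', hc'⟩ := hin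
      rcases ha' with h | h | h
      · exact ⟨a, b, hfa, hfb, hfzb, h, hab⟩
      · -- s - a = b, so s - b = a; then s - c = c
        have hba : s - b = a := by rw [hcan a b h]
        rcases hc' with h2 | h2 | h2
        · exact absurd ((hcan c a h2).trans h) hbc.symm
        · exact absurd ((hcan c b h2).trans hba) hac.symm
        · exact ⟨c, a, hfc, hfa, hfza, h2, hac.symm⟩
      · -- s - a = c, so s - c = a; then s - b = b
        have hca : s - c = a := by rw [hcan a c h]
        rcases hb' with h2 | h2 | h2
        · exact absurd ((hcan b a h2).trans h) hbc
        · exact ⟨b, a, hfb, hfa, hfza, h2, hab.symm⟩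
        · exact absurd ((hcan b c h2).trans hca) hab.symm
    have hpσu : p ≠ s - u := by
      intro h
      have h1 : u = s - p := hcan u p h.symm
      rw [hσp] at h1
      exact hpu h1.symm
    have hBp := hbox hfp
    have hBu := hbox hfu
    have hBσu := hbox hfσu
    set i₀ := idxT N p with hi₀
    set i₁ := idxT N u with hi₁
    set i₂ := idxT N (s - u) with hi₂
    have hd₁ : i₁ ≠ i₀ := idxT_inj hBu hBp hpu.symm
    have hd₂ : i₂ ≠ i₀ := idxT_inj hBσu hBp (fun h => hpσu h.symm)
    set C : ℂ := (f u * conj (f p)) * (f p * conj (f (s - u)))⁻¹ with hC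
    refine measure_mono_null ?_
      (core_null μn i₀ 2 (by norm_num)
        (fun lam => (lam i₁ : ℂ) * (lam i₂ : ℂ) * C)
        (((hcoe.comp (measurable_pi_apply i₁)).mul
          (hcoe.comp (measurable_pi_apply i₂))).mul_const C)
        (fun lam x => by
          simp [Function.update_of_ne hd₁, Function.update_of_ne hd₂]))
    rintro lam ⟨θ, heq⟩
    have hrel := hstar lam θ heq p u
    rw [hσp] at hrel
    rw [illumExt_box lam hBp, illumExt_box lam hBu, illumExt_box lam hBσu] at hrel
    show (lam i₀ : ℂ) ^ 2 = (lam i₁ : ℂ) * (lam i₂ : ℂ) * C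
    have hconj : conj (f (s - u)) ≠ 0 := by
      intro h0
      exact hfσu (by simpa using congrArg (starRingEnd ℂ) h0)
    rw [hC]
    field_simp
    linear_combination hrel
  case neg =>
    -- some w among a,b,c has s - w outside {a,b,c}
    obtain ⟨w, u, hfw, hfu, hfσw, hfσu, hwu, hσww, hσwu⟩ :
        ∃ w u : Fin d → ℤ, f w ≠ 0 ∧ f u ≠ 0 ∧ f (s - w) ≠ 0 ∧ f (s - u) ≠ 0 ∧
          w ≠ u ∧ s - w ≠ w ∧ s - w ≠ u := by
      rw [not_and_or, not_and_or] at hin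
      rcases hin with h | h | h
      · push_neg at h
        exact ⟨a, b, hfa, hfb, hfza, hfzb, hab, h.1, h.2.1⟩
      · push_neg at h
        exact ⟨b, a, hfb, hfa, hfzb, hfza, hab.symm, h.2.1, h.1⟩
      · push_neg at h
        exact ⟨c, a, hfc, hfa, hfzc, hfza, hac.symm, h.2.2, h.1⟩
    have hσwσu : s - w ≠ s - u := hsub w u hwu
    have hBw := hbox hfw
    have hBu := hbox hfu
    have hBσw := hbox hfσw
    have hBσu := hbox hfσu
    set i₀ := idxT N (s - w) with hi₀
    set i₁ := idxT N u with hi₁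
    set i₂ := idxT N (s - u) with hi₂
    set i₃ := idxT N w with hi₃
    have hd₁ : i₁ ≠ i₀ := idxT_inj hBu hBσw (fun h => hσwu h.symm)
    have hd₂ : i₂ ≠ i₀ := idxT_inj hBσu hBσw (fun h => hσwσu h.symm)
    have hd₃ : i₃ ≠ i₀ := idxT_inj hBw hBσw (fun h => hσww h.symm)
    have hconjm : Measurable (fun z : ℂ => (starRingEnd ℂ) z) :=
      Complex.continuous_conj.measurable
    set C : ℂ := (f u * conj (f (s - w))) * (f w * conj (f (s - u)))⁻¹ with hC
    refine measure_mono_null ?_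
      (core_null μn i₀ 1 (by norm_num)
        (fun lam => (lam i₁ : ℂ) * (lam i₂ : ℂ) * conj ((lam i₃ : ℂ)) * C)
        ((((hcoe.comp (measurable_pi_apply i₁)).mul
          (hcoe.comp (measurable_pi_apply i₂))).mul
            (hconjm.comp (hcoe.comp (measurable_pi_apply i₃)))).mul_const C)
        (fun lam x => by
          simp [Function.update_of_ne hd₁, Function.update_of_ne hd₂,
            Function.update_of_ne hd₃]))
    rintro lam ⟨θ, heq⟩
    have hrel := hstar lam θ heq w u
    rw [illumExt_box lam hBw, illumExt_box lam hBu, illumExt_box lam hBσw,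
      illumExt_box lam hBσu] at hrel
    show (lam i₀ : ℂ) ^ 1 = (lam i₁ : ℂ) * (lam i₂ : ℂ) * conj ((lam i₃ : ℂ)) * C
    have hconj : conj (f (s - u)) ≠ 0 := by
      intro h0
      exact hfσu (by simpa using congrArg (starRingEnd ℂ) h0)
    have hu3 := circle_mul_conj (lam i₃)
    rw [hC, pow_one]
    field_simp
    linear_combination conj ((lam i₃ : ℂ)) * hrel
      - ((lam i₀ : ℂ) * (f w * conj (f (s - u)))) * hu3

/-- A finitely supported array `a : ℤ^d → ℂ` is conjugate symmetric if
`a(n) = e^{iθ} conj(a(k−n))` for all `n`, for some `θ ∈ [0,2π)` and some `k ∈ ℤ^d`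
with all `k_j ≥ 1`. -/
def ConjSymmetricArr {d : ℕ} (a : (Fin d → ℤ) → ℂ) : Prop :=
  ∃ θ : ℝ, 0 ≤ θ ∧ θ < 2 * Real.pi ∧ ∃ k : Fin d → ℤ, (∀ j, 1 ≤ k j) ∧
    ∀ n : Fin d → ℤ, a n = Complex.exp (Complex.I * θ) *
      (starRingEnd ℂ) (a (fun j => k j - n j))

/-- For an image with at least three nonzero pixels, almost surely no
shift of the randomly illuminated image, nor of its conjugate inversion, is conjugate
symmetric. -/
theorem illuminated_shifts_not_conjugate_symmetric
    (d : ℕ) (hd : 1 ≤ d) (N : Fin d → ℕ) (hN : ∀ j, 1 ≤ N j)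
    (f : (Fin d → ℤ) → ℂ)
    (hfsupp : ∀ n, ¬ inBox N n → f n = 0)
    (hthree : ∃ a b c : Fin d → ℤ, a ≠ b ∧ a ≠ c ∧ b ≠ c ∧
      f a ≠ 0 ∧ f b ≠ 0 ∧ f c ≠ 0)
    (μn : (∀ j, Fin (N j + 1)) → Measure Circle)
    [∀ n, IsProbabilityMeasure (μn n)] [∀ n, NullSingletonClass (μn n)] :
    ∀ᵐ lam ∂(Measure.pi μn), ∀ t : Fin d → ℤ,
      ¬ ConjSymmetricArr (fun n => illumExt N lam (t + n) * f (t + n)) ∧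
      ¬ ConjSymmetricArr (fun n => (starRingEnd ℂ) (illumExt N lam (t - n) * f (t - n))) := by
  obtain ⟨a, b, c, hab, hac, hbc, hfa, hfb, hfc⟩ := hthree
  set BadS : (Fin d → ℤ) → Set ((∀ j, Fin (N j + 1)) → Circle) := fun s =>
    {lam | ∃ θ : ℝ, ∀ m : Fin d → ℤ,
      illumExt N lam m * f m = Complex.exp (Complex.I * θ) *
        conj (illumExt N lam (s - m) * f (s - m))} with hBadS
  have hnull : ∀ s, Measure.pi μn (BadS s) = 0 := fun s =>
    badS_null N f hfsupp hab hac hbc hfa hfb hfc μn s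
  have hU : Measure.pi μn (⋃ s, BadS s) = 0 := measure_iUnion_null hnull
  rw [ae_iff]
  refine measure_mono_null ?_ hU
  intro lam hlam
  simp only [Set.mem_setOf_eq] at hlam
  rw [not_forall] at hlam
  obtain ⟨t, ht⟩ := hlam
  rw [not_and_or] at ht
  rcases ht with h | h
  · rw [not_not] at h
    obtain ⟨θ, _, _, k, hk, heq⟩ := h
    refine Set.mem_iUnion.mpr ⟨fun j => 2 * t j + k j, θ, fun m => ?_⟩
    have h1 : (t + fun j => m j - t j) = m := by
      funext j; simp only [Pi.add_apply]; ring
    have h2 : (t + fun j => k j - (m j - t j)) = (fun j => 2 * t j + k j) - m := by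
      funext j; simp only [Pi.add_apply, Pi.sub_apply]; ring
    have := heq (fun j => m j - t j)
    beta_reduce at this
    rw [h1, h2] at this
    exact this
  · rw [not_not] at h
    obtain ⟨θ, _, _, k, hk, heq⟩ := h
    refine Set.mem_iUnion.mpr ⟨fun j => 2 * t j - k j, -θ, fun m => ?_⟩
    have h1 : (t - fun j => m j - t j + k j) = (fun j => 2 * t j - k j) - m := by
      funext j; simp only [Pi.sub_apply]; ring
    have h2 : (t - fun j => k j - (m j - t j + k j)) = m := by
      funext j; simp only [Pi.sub_apply]; ring
    have hm := heq (fun j => m j - t j + k j)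
    beta_reduce at hm
    rw [h1, h2] at hm
    rw [Complex.conj_conj] at hm
    show illumExt N lam m * f m = Complex.exp (Complex.I * ((-θ : ℝ) : ℂ)) *
      conj (illumExt N lam ((fun j => 2 * t j - k j) - m) * f ((fun j => 2 * t j - k j) - m))
    rw [hm, ← mul_assoc, ← Complex.exp_add]
    have he : Complex.I * ((-θ : ℝ) : ℂ) + Complex.I * (θ : ℂ) = 0 := by push_cast; ring
    rw [he, Complex.exp_zero, one_mul]
end
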